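/- Let G be a group and X ⊆ G a symmetric subset (X = X⁻¹) which is small in G, i.e. for every finite family g1, …, gn ∈ G the union of left translates g1X ∪ … ∪ gnX is a proper subset of G. Let V and E be finite sets and let s, t : E → V satisfy s(e) ≠ t(e) for every e ∈ E (a finite loopless graph with vertex set V and edge set E). Let W ⊆ V and let Φ : E → G be such that Φ(e) ∉ X whenever both s(e) ∈ W and t(e) ∈ W. Then there exists a function η : V → G with η(w) = 1 for all w ∈ W such that the gauged coloring e ↦ η(s(e)) · Φ(e) · η(t(e))⁻¹ takes no value in X. -/

import Mathlib

open Pointwise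

/-- Admissible colorings exist: let `X` be a symmetric subset of a group `G` that is
small (no finite union of left translates of `X` covers `G`).  Given a finite loopless
graph with edge-endpoint maps `s, t`, a set `W` of vertices, and a `G`-coloring `Φ` of
the edges that avoids `X` on edges with both endpoints in `W`, there is a gauge
`η : V → G`, trivial on `W`, such that the gauged coloring avoids `X` on all edges. -/
theorem stmt1 {G : Type*} [Group G] (X : Set G) (hsym : X⁻¹ = X)
    (hsmall : ∀ S : Finset G, (⋃ g ∈ S, g • X) ≠ Set.univ)
    {V E : Type*} [Fintype V] [Fintype E] (s t : E → V) (hloop : ∀ e : E, s e ≠ t e)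
    (W : Set V) (Φ : E → G) (hadm : ∀ e : E, s e ∈ W → t e ∈ W → Φ e ∉ X) :
    ∃ η : V → G, (∀ w ∈ W, η w = 1) ∧ ∀ e : E, η (s e) * Φ e * (η (t e))⁻¹ ∉ X := by
  classical
  suffices h : ∀ (n : ℕ) (W : Set V) (Φ : E → G),
      Wᶜ.ncard = n →
      (∀ e : E, s e ∈ W → t e ∈ W → Φ e ∉ X) →
      ∃ η : V → G, (∀ w ∈ W, η w = 1) ∧ ∀ e : E, η (s e) * Φ e * (η (t e))⁻¹ ∉ X by
    exact h _ W Φ rfl hadm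
  intro n
  induction n with
  | zero =>
    intro W Φ hc hadm
    have hW : ∀ u : V, u ∈ W := by
      intro u
      by_contra hu
      have h0 : Wᶜ = ∅ := (Set.ncard_eq_zero (Set.toFinite _)).mp hc
      exact absurd (h0 ▸ hu : u ∈ (∅ : Set V)) (Set.notMem_empty u)
    refine ⟨fun _ => 1, fun _ _ => rfl, fun e => ?_⟩
    simpa using hadm e (hW _) (hW _)
  | succ n ih =>
    intro W Φ hc hadm
    obtain ⟨v, hv⟩ := Set.nonempty_of_ncard_ne_zero (by rw [hc]; omega : Wᶜ.ncard ≠ 0)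
    have hvW : v ∉ W := hv
    set S : Finset G := Finset.univ.image Φ ∪ Finset.univ.image (fun e => (Φ e)⁻¹) with hS
    obtain ⟨k, hk⟩ := (Set.ne_univ_iff_exists_notMem _).mp (hsmall S)
    have hk' : ∀ h ∈ S, k ∉ h • X := by
      intro h hh hmem
      exact hk (Set.mem_biUnion hh hmem)
    set g : G := k⁻¹ with hg
    set δ : V → G := fun u => if u = v then g else 1 with hδ
    set Φ' : E → G := fun e => δ (s e) * Φ e * (δ (t e))⁻¹ with hΦ'
    have hadm' : ∀ e : E, s e ∈ insert v W → t e ∈ insert v W → Φ' e ∉ X := by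
      intro e he1 he2 hmem
      by_cases hs : s e = v
      · have ht : t e ≠ v := fun h => hloop e (hs.trans h.symm)
        have htW : t e ∈ W := by
          rcases he2 with h | h
          · exact absurd h ht
          · exact h
        have : Φ' e = g * Φ e := by simp [hΦ', hδ, hs, ht]
        rw [this] at hmem
        -- g * Φ e ∈ X ⟹ (Φ e)⁻¹ * k ∈ X ⟹ k ∈ Φ e • X
        have h1 : (g * Φ e)⁻¹ ∈ X := by
          rw [← hsym]; simpa using hmem
        have h2 : (Φ e)⁻¹ * k ∈ X := by
          simpa [hg, mul_inv_rev] using h1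
        exact hk' (Φ e) (by simp [hS])
          ((Set.mem_smul_set_iff_inv_smul_mem).mpr (by simpa using h2))
      · by_cases ht : t e = v
        · have hsW : s e ∈ W := by
            rcases he1 with h | h
            · exact absurd h hs
            · exact h
          have : Φ' e = Φ e * k := by simp [hΦ', hδ, hs, ht, hg]
          rw [this] at hmem
          exact hk' ((Φ e)⁻¹) (by simp [hS])
            ((Set.mem_smul_set_iff_inv_smul_mem).mpr (by simpa using hmem))
        · have hsW : s e ∈ W := by
            rcases he1 with h | h
            · exact absurd h hs
            · exact h
          have htW : t e ∈ W := by
            rcases he2 with h | h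
            · exact absurd h ht
            · exact h
          have : Φ' e = Φ e := by simp [hΦ', hδ, hs, ht]
          rw [this] at hmem
          exact hadm e hsW htW hmem
    have hc' : (insert v W)ᶜ.ncard = n := by
      have heq : (insert v W)ᶜ = Wᶜ \ {v} := by
        ext u; simp [Set.mem_insert_iff, and_comm]
      rw [heq, Set.ncard_diff_singleton_of_mem hv, hc]; omega
    obtain ⟨η', hη'W, hη'⟩ := ih (insert v W) Φ' hc' hadm'
    refine ⟨fun u => η' u * δ u, ?_, ?_⟩
    · intro w hw
      have h1 : η' w = 1 := hη'W w (Set.mem_insert_of_mem _ hw)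
      have h2 : δ w = 1 := by
        simp [hδ, show w ≠ v from fun h => hvW (h ▸ hw)]
      simp [h1, h2]
    · intro e
      have := hη' e
      simpa [hΦ', mul_assoc, mul_inv_rev] using this
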